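/- Let Φ be a bisymmetric Boolean function on pairs (f,g) ∈ [M]^{[F]} × [M]^{[G]}, expressed in Boolean variables x_{ij} (indicator of f(i)=j) and y_{kj} (indicator of g(k)=j). If there exists a polynomial P of degree at most d in the x_{ij} and y_{kj} that ε-approximates Φ, then there exists a polynomial Q of degree at most d in the 2M variables z_1,…,z_M, w_1,…,w_M (where z_j = |f^{-1}(j)| and w_j = |g^{-1}(j)|) that ε-approximates Φ, and conversely. -/

import Mathlib

open Finset MvPolynomial



open Classical in
lemma stmt13_perm_count {α β : Type*} [Fintype α] [DecidableEq α] [Fintype β] [DecidableEq β]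
    (f : α → β) (S : Finset (α × β)) (hpf : ∀ p ∈ S, ∀ q ∈ S, p.1 = q.1 → p = q) :
    (Finset.univ.filter (fun π : Equiv.Perm α => ∀ p ∈ S, f (π p.1) = p.2)).card
      = (Fintype.card α - S.card).factorial *
        ∏ j : β, ((Finset.univ.filter (fun a => f a = j)).card.descFactorial
          ((S.filter (fun p => p.2 = j)).card) : ℕ) := by
  induction S using Finset.induction_on with
  | empty =>
      simp [Finset.filter_true_of_mem, Fintype.card_perm]
  | @insert p S' hp ih =>
      have hpf' : ∀ q ∈ S', ∀ r ∈ S', q.1 = r.1 → q = r := fun q hq r hr h =>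
        hpf q (mem_insert_of_mem hq) r (mem_insert_of_mem hr) h
      have hfresh : ∀ r ∈ S', r.1 ≠ p.1 := by
        intro r hr h
        have : r = p := hpf r (mem_insert_of_mem hr) p (mem_insert_self _ _) h
        exact hp (this ▸ hr)
      have hinj : Set.InjOn Prod.fst ↑S' := fun a ha b hb h => hpf' a ha b hb h
      have himcard : (S'.image Prod.fst).card = S'.card := card_image_of_injOn hinj
      have hnotmem : p.1 ∉ S'.image Prod.fst := by
        simp only [mem_image, not_exists]
        rintro r ⟨hr, h⟩
        exact hfresh r hr h
      have hlt : S'.card < Fintype.card α := by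
        have h1 : (insert p.1 (S'.image Prod.fst)).card ≤ Fintype.card α := by
          simpa using card_le_card (subset_univ (insert p.1 (S'.image Prod.fst)))
        rw [card_insert_of_notMem hnotmem, himcard] at h1
        omega
      -- the two finsets
      set A := (Finset.univ.filter (fun π : Equiv.Perm α => ∀ r ∈ insert p S', f (π r.1) = r.2))
          ×ˢ (Finset.univ \ S'.image Prod.fst) with hA
      set B := Finset.univ.filter (fun q : Equiv.Perm α × α =>
          (∀ r ∈ S', f (q.1 r.1) = r.2) ∧ f q.2 = p.2 ∧ ∀ r ∈ S', q.2 ≠ q.1 r.1) with hB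
      have hAB : A.card = B.card := by
        apply card_nbij' (i := fun q => (q.1 * Equiv.swap p.1 q.2, q.1 p.1))
          (j := fun q => (q.1 * Equiv.swap p.1 (q.1⁻¹ q.2), q.1⁻¹ q.2))
        · rintro ⟨π', b⟩ hq
          rw [hA, mem_coe, mem_product] at hq
          obtain ⟨h1, h2⟩ := hq
          rw [mem_filter] at h1
          rw [mem_sdiff] at h2
          have hPi := h1.2
          have hb : b ∉ S'.image Prod.fst := h2.2
          have hswap : ∀ r ∈ S', (π' * Equiv.swap p.1 b) r.1 = π' r.1 := by
            intro r hr
            have h3 : r.1 ≠ b := fun h => hb (mem_image.2 ⟨r, hr, h⟩)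
            simp [Equiv.Perm.mul_apply, Equiv.swap_apply_of_ne_of_ne (hfresh r hr) h3]
          rw [hB, mem_coe, mem_filter]
          refine ⟨mem_univ _, ?_, hPi p (mem_insert_self _ _), ?_⟩
          · intro r hr
            rw [hswap r hr]
            exact hPi r (mem_insert_of_mem hr)
          · intro r hr
            rw [hswap r hr]
            exact fun h => (hfresh r hr) (π'.injective h).symm
        · rintro ⟨π, a⟩ hq
          rw [hB, mem_coe, mem_filter] at hq
          obtain ⟨-, hP, hfa, hne⟩ := hq
          have hbim : π⁻¹ a ∉ S'.image Prod.fst := by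
            simp only [mem_image, not_exists]
            rintro r ⟨hr, h⟩
            exact hne r hr (by rw [h]; simp)
          rw [hA, mem_coe, mem_product, mem_filter, mem_sdiff]
          refine ⟨⟨mem_univ _, ?_⟩, mem_univ _, hbim⟩
          intro r hr
          rcases mem_insert.1 hr with h | h
          · subst h
            simpa [Equiv.Perm.mul_apply] using hfa
          · have h3 : r.1 ≠ π⁻¹ a := fun hh => hbim (mem_image.2 ⟨r, h, hh⟩)
            simp only [Equiv.Perm.mul_apply,
              Equiv.swap_apply_of_ne_of_ne (hfresh r h) h3]
            exact hP r h
        · rintro ⟨π', b⟩ hq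
          have h1 : (π' * Equiv.swap p.1 b)⁻¹ (π' p.1) = b := by
            simp [Equiv.Perm.mul_apply]
          ext : 1 <;> simp [h1, mul_assoc, Equiv.swap_mul_self]
        · rintro ⟨π, a⟩ hq
          have h1 : (π * Equiv.swap p.1 (π⁻¹ a)) p.1 = a := by
            simp [Equiv.Perm.mul_apply]
          have h2 : (π * Equiv.swap p.1 (π⁻¹ a))⁻¹ ((π * Equiv.swap p.1 (π⁻¹ a)) p.1)
              = p.1 := by simp
          ext : 1
          · simp only [h1]
            simp [mul_assoc, Equiv.swap_mul_self]
          · simp only [h1]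
      have hcardA : A.card = (Finset.univ.filter (fun π : Equiv.Perm α =>
          ∀ r ∈ insert p S', f (π r.1) = r.2)).card * (Fintype.card α - S'.card) := by
        rw [hA, card_product, card_sdiff_of_subset (subset_univ _), card_univ, himcard]
      have hcount : ∀ π : Equiv.Perm α, (∀ r ∈ S', f (π r.1) = r.2) →
          (Finset.univ.filter (fun a => f a = p.2 ∧ ∀ r ∈ S', a ≠ π r.1)).card
            = (Finset.univ.filter (fun a => f a = p.2)).card
              - (S'.filter (fun r => r.2 = p.2)).card := by
        intro π hπ
        have himg : (S'.filter (fun r => r.2 = p.2)).image (fun r => π r.1)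
            ⊆ Finset.univ.filter (fun a => f a = p.2) := by
          intro a ha
          rw [mem_image] at ha
          obtain ⟨r, hr, hra⟩ := ha
          rw [mem_filter] at hr ⊢
          exact ⟨mem_univ _, by rw [← hra, hπ r hr.1, hr.2]⟩
        have hset : Finset.univ.filter (fun a => f a = p.2 ∧ ∀ r ∈ S', a ≠ π r.1)
            = (Finset.univ.filter (fun a => f a = p.2))
              \ ((S'.filter (fun r => r.2 = p.2)).image (fun r => π r.1)) := by
          ext a
          simp only [mem_filter, mem_sdiff, mem_image, mem_univ, true_and, not_exists]
          constructor
          · rintro ⟨hfa, hnot⟩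
            refine ⟨hfa, ?_⟩
            rintro r ⟨⟨hr, -⟩, hra⟩
            exact hnot r hr hra.symm
          · rintro ⟨hfa, hnot⟩
            refine ⟨hfa, ?_⟩
            intro r hr hra
            have hr2 : r.2 = p.2 := by rw [← hπ r hr, ← hra, hfa]
            exact hnot r ⟨⟨hr, hr2⟩, hra.symm⟩
        have hinj2 : Set.InjOn (fun r : α × β => π r.1) ↑(S'.filter (fun r => r.2 = p.2)) := by
          intro x hx y hy h
          exact hinj (mem_coe.2 (mem_of_mem_filter _ (mem_coe.1 hx)))
            (mem_coe.2 (mem_of_mem_filter _ (mem_coe.1 hy))) (π.injective h)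
        rw [hset, card_sdiff_of_subset himg, card_image_of_injOn hinj2]
      have hcardB : B.card = (Finset.univ.filter (fun π : Equiv.Perm α =>
            ∀ r ∈ S', f (π r.1) = r.2)).card *
          ((Finset.univ.filter (fun a => f a = p.2)).card
            - (S'.filter (fun r => r.2 = p.2)).card) := by
        rw [hB, Finset.card_filter, ← Finset.univ_product_univ, Finset.sum_product]
        have hstep : ∀ π : Equiv.Perm α,
            (∑ a : α, if (∀ r ∈ S', f (π r.1) = r.2) ∧ f a = p.2 ∧ ∀ r ∈ S', a ≠ π r.1
              then 1 else 0)
            = if (∀ r ∈ S', f (π r.1) = r.2) then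
                ((Finset.univ.filter (fun a => f a = p.2)).card
                  - (S'.filter (fun r => r.2 = p.2)).card) else 0 := by
          intro π
          by_cases hπ : ∀ r ∈ S', f (π r.1) = r.2
          · rw [if_pos hπ, ← hcount π hπ, Finset.card_filter]
            exact Finset.sum_congr rfl fun a _ => by simp only [and_iff_right hπ]
          · rw [if_neg hπ]
            exact Finset.sum_eq_zero fun a _ => if_neg (fun hc => hπ hc.1)
        rw [Finset.sum_congr rfl (fun π _ => hstep π), ← Finset.sum_filter,
          Finset.sum_const, smul_eq_mul]
      have hkey : (Finset.univ.filter (fun π : Equiv.Perm α =>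
            ∀ r ∈ insert p S', f (π r.1) = r.2)).card * (Fintype.card α - S'.card)
          = ((Fintype.card α - S'.card).factorial *
              ∏ j : β, ((Finset.univ.filter (fun a => f a = j)).card.descFactorial
                ((S'.filter (fun r => r.2 = j)).card))) *
            ((Finset.univ.filter (fun a => f a = p.2)).card
              - (S'.filter (fun r => r.2 = p.2)).card) := by
        rw [← hcardA, hAB, hcardB, ih hpf']
      have hkins : ∀ j : β, ((insert p S').filter (fun r => r.2 = j)).card
          = (S'.filter (fun r => r.2 = j)).card + (if p.2 = j then 1 else 0) := by
        intro j
        rw [Finset.filter_insert]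
        by_cases h : p.2 = j
        · rw [if_pos h, if_pos h,
            card_insert_of_notMem (fun hm => hp (mem_of_mem_filter _ hm))]
        · rw [if_neg h, if_neg h, add_zero]
      have hprod : (∏ j : β, (Finset.univ.filter (fun a => f a = j)).card.descFactorial
            (((insert p S').filter (fun r => r.2 = j)).card))
          = ((Finset.univ.filter (fun a => f a = p.2)).card
              - (S'.filter (fun r => r.2 = p.2)).card) *
            ∏ j : β, (Finset.univ.filter (fun a => f a = j)).card.descFactorial
              ((S'.filter (fun r => r.2 = j)).card) := by
        have h1 : ∀ j ∈ Finset.univ.erase p.2,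
            (Finset.univ.filter (fun a => f a = j)).card.descFactorial
              (((insert p S').filter (fun r => r.2 = j)).card)
            = (Finset.univ.filter (fun a => f a = j)).card.descFactorial
              ((S'.filter (fun r => r.2 = j)).card) := by
          intro j hj
          rw [hkins j, if_neg (fun h => (mem_erase.1 hj).1 h.symm), add_zero]
        rw [← Finset.mul_prod_erase Finset.univ _ (mem_univ p.2),
          Finset.prod_congr rfl h1, hkins p.2, if_pos rfl, Nat.descFactorial_succ,
          ← Finset.mul_prod_erase Finset.univ
            (fun j => (Finset.univ.filter (fun a => f a = j)).card.descFactorial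
              ((S'.filter (fun r => r.2 = j)).card)) (mem_univ p.2)]
        ring
      have hpos : 0 < Fintype.card α - S'.card := by omega
      have hfact : (Fintype.card α - S'.card).factorial
          = (Fintype.card α - S'.card)
            * (Fintype.card α - (insert p S').card).factorial := by
        rw [card_insert_of_notMem hp]
        have heq : Fintype.card α - S'.card = (Fintype.card α - (S'.card + 1)) + 1 := by
          omega
        conv_lhs => rw [heq, Nat.factorial_succ, ← heq]
      apply Nat.eq_of_mul_eq_mul_right hpos
      rw [hkey, hprod, hfact]
      ring


lemma stmt13_cast_desc (z k : ℕ) :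
    ∏ t ∈ Finset.range k, ((z : ℝ) - (t : ℝ)) = (z.descFactorial k : ℝ) := by
  induction k with
  | zero => simp
  | succ k ih =>
      rw [Finset.prod_range_succ, ih, Nat.descFactorial_succ]
      rcases le_or_gt k z with h | h
      · push_cast [h]
        ring
      · have h1 : z.descFactorial k = 0 := by
          rw [Nat.descFactorial_eq_zero_iff_lt]; omega
        have h2 : z - k = 0 := by omega
        simp [h1, h2]

noncomputable def stmt13_dpoly {σ : Type*} (k : ℕ) (v : σ) : MvPolynomial σ ℝ :=
  ∏ t ∈ Finset.range k, (MvPolynomial.X v - MvPolynomial.C (t : ℝ))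

lemma stmt13_dpoly_deg {σ : Type*} (k : ℕ) (v : σ) :
    (stmt13_dpoly k v).totalDegree ≤ k := by
  refine (MvPolynomial.totalDegree_finset_prod _ _).trans ?_
  have h : ∀ t ∈ Finset.range k, (MvPolynomial.X v - MvPolynomial.C ((t : ℕ) : ℝ)
      : MvPolynomial σ ℝ).totalDegree ≤ 1 := by
    intro t _
    have heq : (MvPolynomial.X v - MvPolynomial.C ((t : ℕ) : ℝ) : MvPolynomial σ ℝ)
        = MvPolynomial.X v + MvPolynomial.C (-((t : ℕ) : ℝ)) := by
      rw [map_neg, sub_eq_add_neg]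
    rw [heq]
    refine (MvPolynomial.totalDegree_add _ _).trans ?_
    rw [MvPolynomial.totalDegree_X, MvPolynomial.totalDegree_C]
    simp
  calc ∑ t ∈ Finset.range k, (MvPolynomial.X v - MvPolynomial.C ((t : ℕ) : ℝ)
        : MvPolynomial σ ℝ).totalDegree ≤ ∑ _t ∈ Finset.range k, 1 :=
        Finset.sum_le_sum h
    _ = k := by simp

lemma stmt13_dpoly_eval {σ : Type*} (k : ℕ) (v : σ) (val : σ → ℝ) (z : ℕ)
    (hv : val v = z) :
    MvPolynomial.eval val (stmt13_dpoly k v) = (z.descFactorial k : ℝ) := by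
  rw [stmt13_dpoly, map_prod, ← stmt13_cast_desc]
  exact Finset.prod_congr rfl fun t _ => by simp [hv]

lemma stmt13_eval_aeval {σ τ : Type*} (s : σ → MvPolynomial τ ℝ) (v : τ → ℝ)
    (q : MvPolynomial σ ℝ) :
    MvPolynomial.eval v (MvPolynomial.aeval s q)
      = MvPolynomial.eval (fun j => MvPolynomial.eval v (s j)) q := by
  induction q using MvPolynomial.induction_on with
  | C a => simp
  | add p q hp hq => rw [map_add, map_add, hp, hq, map_add]
  | mul_X p n hp =>
      rw [map_mul, MvPolynomial.aeval_X, MvPolynomial.eval_mul, hp, map_mul,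
        MvPolynomial.eval_X]

lemma stmt13_totalDegree_aeval_le {σ τ : Type*} (s : σ → MvPolynomial τ ℝ)
    (hs : ∀ v, (s v).totalDegree ≤ 1) (q : MvPolynomial σ ℝ) :
    (MvPolynomial.aeval s q).totalDegree ≤ q.totalDegree := by
  conv_lhs => rw [q.as_sum]
  rw [map_sum]
  refine (MvPolynomial.totalDegree_finset_sum _ _).trans (Finset.sup_le fun m hm => ?_)
  rw [MvPolynomial.aeval_monomial]
  refine (MvPolynomial.totalDegree_mul _ _).trans ?_
  have h1 : (algebraMap ℝ (MvPolynomial τ ℝ) (MvPolynomial.coeff m q)).totalDegree = 0 := by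
    rw [MvPolynomial.algebraMap_eq, MvPolynomial.totalDegree_C]
  rw [h1, zero_add]
  refine le_trans ?_ (MvPolynomial.le_totalDegree hm)
  rw [Finsupp.prod]
  refine (MvPolynomial.totalDegree_finset_prod _ _).trans ?_
  rw [Finsupp.sum]
  refine Finset.sum_le_sum fun n _ => ?_
  refine (MvPolynomial.totalDegree_pow _ _).trans ?_
  calc m n * (s n).totalDegree ≤ m n * 1 := Nat.mul_le_mul_left _ (hs n)
    _ = m n := Nat.mul_one _

lemma stmt13_prod_support {γ δ : Type*} (m : (γ ⊕ δ) →₀ ℕ) (v : γ → ℝ) (w : δ → ℝ)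
    (hv : ∀ x, v x = 0 ∨ v x = 1) (hw : ∀ x, w x = 0 ∨ w x = 1) :
    (m.prod fun q e => (Sum.elim v w q) ^ e)
      = (∏ p ∈ m.support.toLeft, v p) * ∏ p ∈ m.support.toRight, w p := by
  have key : (m.prod fun q e => (Sum.elim v w q) ^ e)
      = ∏ q ∈ m.support, Sum.elim v w q := by
    rw [Finsupp.prod]
    refine Finset.prod_congr rfl fun q hq => ?_
    have he : m q ≠ 0 := Finsupp.mem_support_iff.1 hq
    have hx : Sum.elim v w q = 0 ∨ Sum.elim v w q = 1 := by
      cases q with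
      | inl x => exact hv x
      | inr x => exact hw x
    rcases hx with h | h <;> rw [h]
    · exact zero_pow he
    · exact one_pow _
  rw [key, ← m.support.toLeft_disjSum_toRight, Finset.prod_disjSum]
  simp



open Classical in
lemma stmt13_fwd (F G M d : ℕ) (ε : ℝ)
    (Φ : (Fin F → Fin M) → (Fin G → Fin M) → Bool)
    (hsym : ∀ (f : Fin F → Fin M) (g : Fin G → Fin M) (πF : Equiv.Perm (Fin F))
      (πG : Equiv.Perm (Fin G)), Φ (f ∘ πF) (g ∘ πG) = Φ f g)
    (P : MvPolynomial ((Fin F × Fin M) ⊕ (Fin G × Fin M)) ℝ)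
    (hPd : P.totalDegree ≤ d)
    (hP : ∀ (f : Fin F → Fin M) (g : Fin G → Fin M),
      MvPolynomial.eval
          (Sum.elim (fun p : Fin F × Fin M => if f p.1 = p.2 then (1 : ℝ) else 0)
            (fun p : Fin G × Fin M => if g p.1 = p.2 then (1 : ℝ) else 0)) P ∈
        Set.Icc (0 : ℝ) 1 ∧
      |MvPolynomial.eval
          (Sum.elim (fun p : Fin F × Fin M => if f p.1 = p.2 then (1 : ℝ) else 0)
            (fun p : Fin G × Fin M => if g p.1 = p.2 then (1 : ℝ) else 0)) P -
        (if Φ f g then 1 else 0)| ≤ ε) :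
    (∃ Q : MvPolynomial (Fin M ⊕ Fin M) ℝ,
      Q.totalDegree ≤ d ∧
      ∀ (f : Fin F → Fin M) (g : Fin G → Fin M),
        MvPolynomial.eval
            (Sum.elim
              (fun jj : Fin M => ((Finset.univ.filter (fun i => f i = jj)).card : ℝ))
              (fun jj : Fin M => ((Finset.univ.filter (fun k => g k = jj)).card : ℝ))) Q ∈
          Set.Icc (0 : ℝ) 1 ∧
        |MvPolynomial.eval
            (Sum.elim
              (fun jj : Fin M => ((Finset.univ.filter (fun i => f i = jj)).card : ℝ))
              (fun jj : Fin M => ((Finset.univ.filter (fun k => g k = jj)).card : ℝ))) Q -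
          (if Φ f g then 1 else 0)| ≤ ε) := by
  classical
  set Qmon : (((Fin F × Fin M) ⊕ (Fin G × Fin M)) →₀ ℕ) → MvPolynomial (Fin M ⊕ Fin M) ℝ :=
    fun m =>
      if (∀ p ∈ m.support.toLeft, ∀ q ∈ m.support.toLeft, p.1 = q.1 → p = q) ∧
         (∀ p ∈ m.support.toRight, ∀ q ∈ m.support.toRight, p.1 = q.1 → p = q) then
        (((F.descFactorial m.support.toLeft.card : ℕ) : ℝ) *
          ((G.descFactorial m.support.toRight.card : ℕ) : ℝ))⁻¹ •
          ((∏ j : Fin M, stmt13_dpoly ((m.support.toLeft.filter (fun p => p.2 = j)).card)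
              (Sum.inl j : Fin M ⊕ Fin M)) *
           (∏ j : Fin M, stmt13_dpoly ((m.support.toRight.filter (fun p => p.2 = j)).card)
              (Sum.inr j : Fin M ⊕ Fin M)))
      else 0
    with hQmon
  refine ⟨∑ m ∈ P.support, MvPolynomial.C (P.coeff m) * Qmon m, ?_, ?_⟩
  · refine (MvPolynomial.totalDegree_finset_sum _ _).trans (Finset.sup_le fun m hm => ?_)
    refine (MvPolynomial.totalDegree_mul _ _).trans ?_
    rw [MvPolynomial.totalDegree_C, zero_add]
    have hbound : (Qmon m).totalDegree ≤ m.support.card := by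
      rw [hQmon]
      dsimp only
      split_ifs with h
      · refine (MvPolynomial.totalDegree_smul_le _ _).trans ?_
        refine (MvPolynomial.totalDegree_mul _ _).trans ?_
        have hL : (∏ j : Fin M, stmt13_dpoly
              ((m.support.toLeft.filter (fun p => p.2 = j)).card)
              (Sum.inl j : Fin M ⊕ Fin M)).totalDegree ≤ m.support.toLeft.card := by
          refine (MvPolynomial.totalDegree_finset_prod _ _).trans ?_
          refine le_trans (Finset.sum_le_sum fun j _ => stmt13_dpoly_deg _ _) ?_
          exact le_of_eq (Finset.card_eq_sum_card_fiberwise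
            (f := Prod.snd) (fun x _ => Finset.mem_univ x.2)).symm
        have hR : (∏ j : Fin M, stmt13_dpoly
              ((m.support.toRight.filter (fun p => p.2 = j)).card)
              (Sum.inr j : Fin M ⊕ Fin M)).totalDegree ≤ m.support.toRight.card := by
          refine (MvPolynomial.totalDegree_finset_prod _ _).trans ?_
          refine le_trans (Finset.sum_le_sum fun j _ => stmt13_dpoly_deg _ _) ?_
          exact le_of_eq (Finset.card_eq_sum_card_fiberwise
            (f := Prod.snd) (fun x _ => Finset.mem_univ x.2)).symm
        refine le_trans (add_le_add hL hR) ?_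
        rw [Finset.card_toLeft_add_card_toRight]
      · simp
    refine hbound.trans (le_trans ?_ (le_trans (MvPolynomial.le_totalDegree hm) hPd))
    rw [Finsupp.sum, Finset.card_eq_sum_ones]
    exact Finset.sum_le_sum fun q hq => Nat.one_le_iff_ne_zero.2 (Finsupp.mem_support_iff.1 hq)
  · intro f g
    have hFpos : (0:ℝ) < (F.factorial : ℝ) := by exact_mod_cast F.factorial_pos
    have hGpos : (0:ℝ) < (G.factorial : ℝ) := by exact_mod_cast G.factorial_pos
    have hNpos : (0:ℝ) < (F.factorial : ℝ) * (G.factorial : ℝ) := mul_pos hFpos hGpos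
    have hmon : ∀ m : ((Fin F × Fin M) ⊕ (Fin G × Fin M)) →₀ ℕ,
        MvPolynomial.eval (Sum.elim
            (fun jj : Fin M => ((Finset.univ.filter (fun i => f i = jj)).card : ℝ))
            (fun jj : Fin M => ((Finset.univ.filter (fun k => g k = jj)).card : ℝ)))
          (Qmon m) * ((F.factorial : ℝ) * (G.factorial : ℝ))
        = ∑ π : Equiv.Perm (Fin F), ∑ ρ : Equiv.Perm (Fin G),
            m.prod fun q e => (Sum.elim
              (fun p : Fin F × Fin M => if (f ∘ π) p.1 = p.2 then (1 : ℝ) else 0)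
              (fun p : Fin G × Fin M => if (g ∘ ρ) p.1 = p.2 then (1 : ℝ) else 0) q) ^ e := by
      intro m
      have hterm : ∀ (π : Equiv.Perm (Fin F)) (ρ : Equiv.Perm (Fin G)),
          (m.prod fun q e => (Sum.elim
              (fun p : Fin F × Fin M => if (f ∘ π) p.1 = p.2 then (1 : ℝ) else 0)
              (fun p : Fin G × Fin M => if (g ∘ ρ) p.1 = p.2 then (1 : ℝ) else 0) q) ^ e)
          = (if ∀ p ∈ m.support.toLeft, f (π p.1) = p.2 then (1:ℝ) else 0) *
            (if ∀ p ∈ m.support.toRight, g (ρ p.1) = p.2 then (1:ℝ) else 0) := by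
        intro π ρ
        rw [stmt13_prod_support _ _ _
          (fun x => by by_cases h : f (π x.1) = x.2 <;> simp [Function.comp, h])
          (fun x => by by_cases h : g (ρ x.1) = x.2 <;> simp [Function.comp, h]),
          Finset.prod_boole, Finset.prod_boole]
        simp [Function.comp]
      rw [Finset.sum_congr rfl fun π _ => Finset.sum_congr rfl fun ρ _ => hterm π ρ,
        ← Finset.sum_mul_sum, Finset.sum_boole, Finset.sum_boole]
      by_cases hpf : (∀ p ∈ m.support.toLeft, ∀ q ∈ m.support.toLeft, p.1 = q.1 → p = q) ∧
          (∀ p ∈ m.support.toRight, ∀ q ∈ m.support.toRight, p.1 = q.1 → p = q)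
      · have hcx := stmt13_perm_count f m.support.toLeft hpf.1
        have hcy := stmt13_perm_count g m.support.toRight hpf.2
        rw [Fintype.card_fin] at hcx hcy
        have hkF : m.support.toLeft.card ≤ F := by
          have h1 : (m.support.toLeft.image Prod.fst).card = m.support.toLeft.card :=
            Finset.card_image_of_injOn (fun a ha b hb h =>
              hpf.1 a (Finset.mem_coe.1 ha) b (Finset.mem_coe.1 hb) h)
          calc m.support.toLeft.card = (m.support.toLeft.image Prod.fst).card := h1.symm
            _ ≤ (Finset.univ : Finset (Fin F)).card :=
                Finset.card_le_card (Finset.subset_univ _)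
            _ = F := by simp
        have hkG : m.support.toRight.card ≤ G := by
          have h1 : (m.support.toRight.image Prod.fst).card = m.support.toRight.card :=
            Finset.card_image_of_injOn (fun a ha b hb h =>
              hpf.2 a (Finset.mem_coe.1 ha) b (Finset.mem_coe.1 hb) h)
          calc m.support.toRight.card = (m.support.toRight.image Prod.fst).card := h1.symm
            _ ≤ (Finset.univ : Finset (Fin G)).card :=
                Finset.card_le_card (Finset.subset_univ _)
            _ = G := by simp
        rw [hQmon]
        dsimp only
        rw [if_pos hpf, MvPolynomial.smul_eq_C_mul, MvPolynomial.eval_mul,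
          MvPolynomial.eval_C, MvPolynomial.eval_mul, map_prod, map_prod]
        have hevL : ∀ j : Fin M, MvPolynomial.eval (Sum.elim
            (fun jj : Fin M => ((Finset.univ.filter (fun i => f i = jj)).card : ℝ))
            (fun jj : Fin M => ((Finset.univ.filter (fun k => g k = jj)).card : ℝ)))
            (stmt13_dpoly ((m.support.toLeft.filter (fun p => p.2 = j)).card)
              (Sum.inl j : Fin M ⊕ Fin M))
            = (((Finset.univ.filter (fun i => f i = j)).card.descFactorial
                ((m.support.toLeft.filter (fun p => p.2 = j)).card) : ℕ) : ℝ) :=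
          fun j => stmt13_dpoly_eval _ _ _ _ rfl
        have hevR : ∀ j : Fin M, MvPolynomial.eval (Sum.elim
            (fun jj : Fin M => ((Finset.univ.filter (fun i => f i = jj)).card : ℝ))
            (fun jj : Fin M => ((Finset.univ.filter (fun k => g k = jj)).card : ℝ)))
            (stmt13_dpoly ((m.support.toRight.filter (fun p => p.2 = j)).card)
              (Sum.inr j : Fin M ⊕ Fin M))
            = (((Finset.univ.filter (fun k => g k = j)).card.descFactorial
                ((m.support.toRight.filter (fun p => p.2 = j)).card) : ℕ) : ℝ) :=
          fun j => stmt13_dpoly_eval _ _ _ _ rfl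
        rw [Finset.prod_congr rfl fun j _ => hevL j, Finset.prod_congr rfl fun j _ => hevR j,
          hcx, hcy]
        push_cast
        have hFfac : (F.factorial : ℝ)
            = ((F - m.support.toLeft.card).factorial : ℝ)
              * (F.descFactorial m.support.toLeft.card : ℝ) := by
          exact_mod_cast congrArg (Nat.cast (R := ℝ))
            (Nat.factorial_mul_descFactorial hkF).symm
        have hGfac : (G.factorial : ℝ)
            = ((G - m.support.toRight.card).factorial : ℝ)
              * (G.descFactorial m.support.toRight.card : ℝ) := by
          exact_mod_cast congrArg (Nat.cast (R := ℝ))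
            (Nat.factorial_mul_descFactorial hkG).symm
        have hdxne : (F.descFactorial m.support.toLeft.card : ℝ) ≠ 0 := by
          have : 0 < F.descFactorial m.support.toLeft.card := by
            rcases Nat.lt_or_ge F m.support.toLeft.card with h | h
            · omega
            · have := Nat.descFactorial_eq_zero_iff_lt (n := F)
                (k := m.support.toLeft.card)
              rcases Nat.eq_zero_or_pos (F.descFactorial m.support.toLeft.card) with h0 | h0
              · exact absurd (this.1 h0) (by omega)
              · exact h0
          exact_mod_cast this.ne'
        have hdyne : (G.descFactorial m.support.toRight.card : ℝ) ≠ 0 := by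
          have : 0 < G.descFactorial m.support.toRight.card := by
            rcases Nat.lt_or_ge G m.support.toRight.card with h | h
            · omega
            · have := Nat.descFactorial_eq_zero_iff_lt (n := G)
                (k := m.support.toRight.card)
              rcases Nat.eq_zero_or_pos (G.descFactorial m.support.toRight.card) with h0 | h0
              · exact absurd (this.1 h0) (by omega)
              · exact h0
          exact_mod_cast this.ne'
        rw [hFfac, hGfac]
        field_simp
      · rw [hQmon]
        dsimp only
        rw [if_neg hpf, map_zero, zero_mul]
        symm
        rcases not_and_or.1 hpf with h | h
        · have hzero : (Finset.univ.filter (fun π : Equiv.Perm (Fin F) =>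
              ∀ p ∈ m.support.toLeft, f (π p.1) = p.2)) = ∅ := by
            rw [Finset.filter_eq_empty_iff]
            intro π _
            push_neg at h
            obtain ⟨p, hp, q, hq, h1, h2⟩ := h
            intro hall
            exact h2 (Prod.ext h1 (by rw [← hall p hp, ← hall q hq, h1]))
          rw [hzero]
          simp
        · have hzero : (Finset.univ.filter (fun ρ : Equiv.Perm (Fin G) =>
              ∀ p ∈ m.support.toRight, g (ρ p.1) = p.2)) = ∅ := by
            rw [Finset.filter_eq_empty_iff]
            intro ρ _
            push_neg at h
            obtain ⟨p, hp, q, hq, h1, h2⟩ := h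
            intro hall
            exact h2 (Prod.ext h1 (by rw [← hall p hp, ← hall q hq, h1]))
          rw [hzero]
          simp
    set N : ℝ := (F.factorial : ℝ) * (G.factorial : ℝ) with hNdef
    have hQeval : MvPolynomial.eval (Sum.elim
          (fun jj : Fin M => ((Finset.univ.filter (fun i => f i = jj)).card : ℝ))
          (fun jj : Fin M => ((Finset.univ.filter (fun k => g k = jj)).card : ℝ)))
        (∑ m ∈ P.support, MvPolynomial.C (P.coeff m) * Qmon m)
        = N⁻¹ * ∑ π : Equiv.Perm (Fin F), ∑ ρ : Equiv.Perm (Fin G),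
            MvPolynomial.eval (Sum.elim
              (fun p : Fin F × Fin M => if (f ∘ π) p.1 = p.2 then (1 : ℝ) else 0)
              (fun p : Fin G × Fin M => if (g ∘ ρ) p.1 = p.2 then (1 : ℝ) else 0)) P := by
      have hmul : MvPolynomial.eval (Sum.elim
            (fun jj : Fin M => ((Finset.univ.filter (fun i => f i = jj)).card : ℝ))
            (fun jj : Fin M => ((Finset.univ.filter (fun k => g k = jj)).card : ℝ)))
          (∑ m ∈ P.support, MvPolynomial.C (P.coeff m) * Qmon m) * N
          = ∑ π : Equiv.Perm (Fin F), ∑ ρ : Equiv.Perm (Fin G),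
              MvPolynomial.eval (Sum.elim
                (fun p : Fin F × Fin M => if (f ∘ π) p.1 = p.2 then (1 : ℝ) else 0)
                (fun p : Fin G × Fin M => if (g ∘ ρ) p.1 = p.2 then (1 : ℝ) else 0)) P := by
        rw [map_sum, Finset.sum_mul]
        have h1 : ∀ m ∈ P.support,
            MvPolynomial.eval (Sum.elim
              (fun jj : Fin M => ((Finset.univ.filter (fun i => f i = jj)).card : ℝ))
              (fun jj : Fin M => ((Finset.univ.filter (fun k => g k = jj)).card : ℝ)))
              (MvPolynomial.C (P.coeff m) * Qmon m) * N
            = P.coeff m * ∑ π : Equiv.Perm (Fin F), ∑ ρ : Equiv.Perm (Fin G),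
                m.prod fun q e => (Sum.elim
                  (fun p : Fin F × Fin M => if (f ∘ π) p.1 = p.2 then (1 : ℝ) else 0)
                  (fun p : Fin G × Fin M => if (g ∘ ρ) p.1 = p.2 then (1 : ℝ) else 0) q) ^ e := by
          intro m _
          rw [MvPolynomial.eval_mul, MvPolynomial.eval_C, mul_assoc, hmon m]
        rw [Finset.sum_congr rfl h1]
        simp only [Finset.mul_sum]
        rw [Finset.sum_comm]
        refine Finset.sum_congr rfl fun π _ => ?_
        rw [Finset.sum_comm]
        refine Finset.sum_congr rfl fun ρ _ => ?_
        rw [MvPolynomial.eval_eq]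
        rfl
      rw [← hmul, mul_comm _ N, inv_mul_cancel_left₀ hNpos.ne']
    have hterm2 : ∀ (π : Equiv.Perm (Fin F)) (ρ : Equiv.Perm (Fin G)),
        MvPolynomial.eval (Sum.elim
          (fun p : Fin F × Fin M => if (f ∘ π) p.1 = p.2 then (1 : ℝ) else 0)
          (fun p : Fin G × Fin M => if (g ∘ ρ) p.1 = p.2 then (1 : ℝ) else 0)) P
          ∈ Set.Icc (0:ℝ) 1 ∧
        |MvPolynomial.eval (Sum.elim
          (fun p : Fin F × Fin M => if (f ∘ π) p.1 = p.2 then (1 : ℝ) else 0)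
          (fun p : Fin G × Fin M => if (g ∘ ρ) p.1 = p.2 then (1 : ℝ) else 0)) P -
          (if Φ f g then 1 else 0)| ≤ ε := by
      intro π ρ
      have h2 := hP (f ∘ π) (g ∘ ρ)
      rw [hsym f g π ρ] at h2
      exact h2
    have hS0 : (0:ℝ) ≤ ∑ π : Equiv.Perm (Fin F), ∑ ρ : Equiv.Perm (Fin G),
        MvPolynomial.eval (Sum.elim
          (fun p : Fin F × Fin M => if (f ∘ π) p.1 = p.2 then (1 : ℝ) else 0)
          (fun p : Fin G × Fin M => if (g ∘ ρ) p.1 = p.2 then (1 : ℝ) else 0)) P :=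
      Finset.sum_nonneg fun π _ => Finset.sum_nonneg fun ρ _ =>
        (Set.mem_Icc.1 (hterm2 π ρ).1).1
    have hS1 : (∑ π : Equiv.Perm (Fin F), ∑ ρ : Equiv.Perm (Fin G),
        MvPolynomial.eval (Sum.elim
          (fun p : Fin F × Fin M => if (f ∘ π) p.1 = p.2 then (1 : ℝ) else 0)
          (fun p : Fin G × Fin M => if (g ∘ ρ) p.1 = p.2 then (1 : ℝ) else 0)) P) ≤ N := by
      calc (∑ π : Equiv.Perm (Fin F), ∑ ρ : Equiv.Perm (Fin G),
          MvPolynomial.eval (Sum.elim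
            (fun p : Fin F × Fin M => if (f ∘ π) p.1 = p.2 then (1 : ℝ) else 0)
            (fun p : Fin G × Fin M => if (g ∘ ρ) p.1 = p.2 then (1 : ℝ) else 0)) P)
          ≤ ∑ _π : Equiv.Perm (Fin F), ∑ _ρ : Equiv.Perm (Fin G), (1:ℝ) :=
            Finset.sum_le_sum fun π _ => Finset.sum_le_sum fun ρ _ =>
              (Set.mem_Icc.1 (hterm2 π ρ).1).2
        _ = N := by
            simp [Finset.sum_const, Finset.card_univ, Fintype.card_perm,
              Fintype.card_fin, hNdef]
    constructor
    · rw [hQeval, Set.mem_Icc]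
      constructor
      · exact mul_nonneg (inv_nonneg.2 hNpos.le) hS0
      · calc N⁻¹ * _ ≤ N⁻¹ * N := mul_le_mul_of_nonneg_left hS1 (inv_nonneg.2 hNpos.le)
          _ = 1 := inv_mul_cancel₀ hNpos.ne'
    · rw [hQeval]
      have hconst : (∑ _π : Equiv.Perm (Fin F), ∑ _ρ : Equiv.Perm (Fin G),
          (if Φ f g then (1:ℝ) else 0)) = N * (if Φ f g then (1:ℝ) else 0) := by
        simp [Finset.sum_const, Finset.card_univ, Fintype.card_perm,
          Fintype.card_fin, hNdef]
      have h4 : (∑ π : Equiv.Perm (Fin F), ∑ ρ : Equiv.Perm (Fin G),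
          (MvPolynomial.eval (Sum.elim
            (fun p : Fin F × Fin M => if (f ∘ π) p.1 = p.2 then (1 : ℝ) else 0)
            (fun p : Fin G × Fin M => if (g ∘ ρ) p.1 = p.2 then (1 : ℝ) else 0)) P
            - (if Φ f g then (1:ℝ) else 0)))
          = (∑ π : Equiv.Perm (Fin F), ∑ ρ : Equiv.Perm (Fin G),
              MvPolynomial.eval (Sum.elim
                (fun p : Fin F × Fin M => if (f ∘ π) p.1 = p.2 then (1 : ℝ) else 0)
                (fun p : Fin G × Fin M => if (g ∘ ρ) p.1 = p.2 then (1 : ℝ) else 0)) P)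
            - N * (if Φ f g then (1:ℝ) else 0) := by
        simp only [Finset.sum_sub_distrib]
        rw [hconst]
      have hrw : N⁻¹ * (∑ π : Equiv.Perm (Fin F), ∑ ρ : Equiv.Perm (Fin G),
            MvPolynomial.eval (Sum.elim
              (fun p : Fin F × Fin M => if (f ∘ π) p.1 = p.2 then (1 : ℝ) else 0)
              (fun p : Fin G × Fin M => if (g ∘ ρ) p.1 = p.2 then (1 : ℝ) else 0)) P)
            - (if Φ f g then (1:ℝ) else 0)
          = N⁻¹ * ∑ π : Equiv.Perm (Fin F), ∑ ρ : Equiv.Perm (Fin G),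
              (MvPolynomial.eval (Sum.elim
                (fun p : Fin F × Fin M => if (f ∘ π) p.1 = p.2 then (1 : ℝ) else 0)
                (fun p : Fin G × Fin M => if (g ∘ ρ) p.1 = p.2 then (1 : ℝ) else 0)) P
                - (if Φ f g then (1:ℝ) else 0)) := by
        rw [h4, mul_sub, inv_mul_cancel_left₀ hNpos.ne']
      rw [hrw, abs_mul, abs_of_pos (inv_pos.2 hNpos)]
      have habs : |∑ π : Equiv.Perm (Fin F), ∑ ρ : Equiv.Perm (Fin G),
          (MvPolynomial.eval (Sum.elim
            (fun p : Fin F × Fin M => if (f ∘ π) p.1 = p.2 then (1 : ℝ) else 0)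
            (fun p : Fin G × Fin M => if (g ∘ ρ) p.1 = p.2 then (1 : ℝ) else 0)) P
            - (if Φ f g then (1:ℝ) else 0))| ≤ N * ε := by
        refine le_trans (Finset.abs_sum_le_sum_abs _ _) ?_
        refine le_trans (Finset.sum_le_sum fun π _ => Finset.abs_sum_le_sum_abs _ _) ?_
        refine le_trans (Finset.sum_le_sum fun π _ =>
          Finset.sum_le_sum fun ρ _ => (hterm2 π ρ).2) ?_
        refine le_of_eq ?_
        simp [Finset.sum_const, Finset.card_univ, Fintype.card_perm,
          Fintype.card_fin, hNdef]
        ring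
      calc N⁻¹ * |∑ π : Equiv.Perm (Fin F), ∑ ρ : Equiv.Perm (Fin G),
            (MvPolynomial.eval (Sum.elim
              (fun p : Fin F × Fin M => if (f ∘ π) p.1 = p.2 then (1 : ℝ) else 0)
              (fun p : Fin G × Fin M => if (g ∘ ρ) p.1 = p.2 then (1 : ℝ) else 0)) P
              - (if Φ f g then (1:ℝ) else 0))|
          ≤ N⁻¹ * (N * ε) := mul_le_mul_of_nonneg_left habs (inv_nonneg.2 hNpos.le)
        _ = ε := by rw [inv_mul_cancel_left₀ hNpos.ne']


open Classical in
/-- For a bisymmetric Boolean function `Φ` on pairs of functions, a degree-`d`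
`ε`-approximating polynomial in the indicator variables `x_{ij}, y_{kj}` exists
iff a degree-`d` `ε`-approximating polynomial in the preimage-count variables
`z_1,…,z_M, w_1,…,w_M` exists. -/
theorem stmt13 (F G M : ℕ) (d : ℕ) (ε : ℝ)
    (Φ : (Fin F → Fin M) → (Fin G → Fin M) → Bool)
    (hsym : ∀ (f : Fin F → Fin M) (g : Fin G → Fin M) (πF : Equiv.Perm (Fin F))
      (πG : Equiv.Perm (Fin G)) (σ : Equiv.Perm (Fin M)),
      Φ (σ ∘ f ∘ πF) (σ ∘ g ∘ πG) = Φ f g) :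
    (∃ P : MvPolynomial ((Fin F × Fin M) ⊕ (Fin G × Fin M)) ℝ,
      P.totalDegree ≤ d ∧
      ∀ (f : Fin F → Fin M) (g : Fin G → Fin M),
        MvPolynomial.eval
            (Sum.elim (fun p : Fin F × Fin M => if f p.1 = p.2 then (1 : ℝ) else 0)
              (fun p : Fin G × Fin M => if g p.1 = p.2 then (1 : ℝ) else 0)) P ∈
          Set.Icc (0 : ℝ) 1 ∧
        |MvPolynomial.eval
            (Sum.elim (fun p : Fin F × Fin M => if f p.1 = p.2 then (1 : ℝ) else 0)
              (fun p : Fin G × Fin M => if g p.1 = p.2 then (1 : ℝ) else 0)) P -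
          (if Φ f g then 1 else 0)| ≤ ε) ↔
    (∃ Q : MvPolynomial (Fin M ⊕ Fin M) ℝ,
      Q.totalDegree ≤ d ∧
      ∀ (f : Fin F → Fin M) (g : Fin G → Fin M),
        MvPolynomial.eval
            (Sum.elim
              (fun jj : Fin M => ((Finset.univ.filter (fun i => f i = jj)).card : ℝ))
              (fun jj : Fin M => ((Finset.univ.filter (fun k => g k = jj)).card : ℝ))) Q ∈
          Set.Icc (0 : ℝ) 1 ∧
        |MvPolynomial.eval
            (Sum.elim
              (fun jj : Fin M => ((Finset.univ.filter (fun i => f i = jj)).card : ℝ))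
              (fun jj : Fin M => ((Finset.univ.filter (fun k => g k = jj)).card : ℝ))) Q -
          (if Φ f g then 1 else 0)| ≤ ε) := by
  constructor
  · rintro ⟨P, hPd, hP⟩
    refine stmt13_fwd F G M d ε Φ (fun f g πF πG => ?_) P hPd hP
    have h := hsym f g πF πG 1
    simpa using h
  · rintro ⟨Q, hQd, hQ⟩
    refine ⟨MvPolynomial.aeval (Sum.elim
        (fun j : Fin M => ∑ i : Fin F, MvPolynomial.X (Sum.inl (i, j)))
        (fun j : Fin M => ∑ k : Fin G, MvPolynomial.X (Sum.inr (k, j)))) Q, ?_, ?_⟩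
    · refine le_trans (stmt13_totalDegree_aeval_le _ ?_ Q) hQd
      rintro (j | j)
      · refine (MvPolynomial.totalDegree_finset_sum _ _).trans (Finset.sup_le fun i _ => ?_)
        exact le_of_eq (MvPolynomial.totalDegree_X _)
      · refine (MvPolynomial.totalDegree_finset_sum _ _).trans (Finset.sup_le fun k _ => ?_)
        exact le_of_eq (MvPolynomial.totalDegree_X _)
    · intro f g
      have hkey : MvPolynomial.eval
          (Sum.elim (fun p : Fin F × Fin M => if f p.1 = p.2 then (1 : ℝ) else 0)
            (fun p : Fin G × Fin M => if g p.1 = p.2 then (1 : ℝ) else 0))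
          (MvPolynomial.aeval (Sum.elim
            (fun j : Fin M => ∑ i : Fin F, MvPolynomial.X (Sum.inl (i, j)))
            (fun j : Fin M => ∑ k : Fin G, MvPolynomial.X (Sum.inr (k, j)))) Q)
          = MvPolynomial.eval
            (Sum.elim
              (fun jj : Fin M => ((Finset.univ.filter (fun i => f i = jj)).card : ℝ))
              (fun jj : Fin M => ((Finset.univ.filter (fun k => g k = jj)).card : ℝ))) Q := by
        rw [stmt13_eval_aeval]
        refine congrArg (fun v => MvPolynomial.eval v Q) (funext fun j => ?_)
        cases j with
        | inl j => simp [Finset.sum_boole]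
        | inr j => simp [Finset.sum_boole]
      rw [hkey]
      exact hQ f g
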